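/- Let x, y₁, y₂ be points in a Euclidean cone (or locally Euclidean stratified space) with d(x,y₁) = d(x,y₂) = 1, and suppose there are orthogonal decompositions d²(y₁,y₂) = d²(y₁^∥, y₂^∥) + d²(y₁^⊥, y₂^⊥) with y_i^∥, y_i^⊥ at distances r_i^∥, r_i^⊥ from x satisfying (r_i^∥)² + (r_i^⊥)² = 1. Then cos(∠_x(y₁,y₂)) = cos θ₁ cos θ₂ cos(∠_x(y₁^∥,y₂^∥)) + sin θ₁ sin θ₂ cos(∠_x(y₁^⊥,y₂^⊥)), where sin θ_i = r_i^⊥. -/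

import Mathlib

open Set Real

/-- The Euclidean angle at x between u and v, via the law of cosines. -/
noncomputable def cosAng {M : Type*} [MetricSpace M] (x u v : M) : ℝ :=
  (dist x u ^ 2 + dist x v ^ 2 - dist u v ^ 2) / (2 * dist x u * dist x v)

/-- Key computation for the spherical-join splitting of the space of directions:
given orthogonal decompositions of y₁, y₂ relative to x (with d(x,y₁)=d(x,y₂)=1),
cos ∠_x(y₁,y₂) = cos θ₁ cos θ₂ cos ∠_x(y₁^∥,y₂^∥) + sin θ₁ sin θ₂ cos ∠_x(y₁^⊥,y₂^⊥),
where sin θᵢ = rᵢ^⊥ and (rᵢ^∥)² + (rᵢ^⊥)² = 1. -/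
theorem cosine_splitting
    {M : Type*} [MetricSpace M]
    (x y₁ y₂ y₁par y₂par y₁perp y₂perp : M)
    (r₁par r₂par r₁perp r₂perp θ₁ θ₂ : ℝ)
    (h₁ : dist x y₁ = 1) (h₂ : dist x y₂ = 1)
    (h₁par : dist x y₁par = r₁par) (h₂par : dist x y₂par = r₂par)
    (h₁perp : dist x y₁perp = r₁perp) (h₂perp : dist x y₂perp = r₂perp)
    (hr₁par : 0 < r₁par) (hr₂par : 0 < r₂par)
    (hr₁perp : 0 < r₁perp) (hr₂perp : 0 < r₂perp)
    (hpyth₁ : r₁par ^ 2 + r₁perp ^ 2 = 1) (hpyth₂ : r₂par ^ 2 + r₂perp ^ 2 = 1)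
    (hθ₁ : θ₁ ∈ Icc 0 (π / 2)) (hθ₂ : θ₂ ∈ Icc 0 (π / 2))
    (hsin₁ : Real.sin θ₁ = r₁perp) (hsin₂ : Real.sin θ₂ = r₂perp)
    (hortho : dist y₁ y₂ ^ 2 = dist y₁par y₂par ^ 2 + dist y₁perp y₂perp ^ 2) :
    cosAng x y₁ y₂ =
      Real.cos θ₁ * Real.cos θ₂ * cosAng x y₁par y₂par
        + Real.sin θ₁ * Real.sin θ₂ * cosAng x y₁perp y₂perp := by
  have hcos₁ : Real.cos θ₁ = r₁par := by
    have h := Real.sin_sq_add_cos_sq θ₁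
    have hnn : 0 ≤ Real.cos θ₁ := Real.cos_nonneg_of_mem_Icc
      ⟨by linarith [hθ₁.1, Real.pi_pos], hθ₁.2⟩
    nlinarith [hθ₁.1, hθ₁.2]
  have hcos₂ : Real.cos θ₂ = r₂par := by
    have h := Real.sin_sq_add_cos_sq θ₂
    have hnn : 0 ≤ Real.cos θ₂ := Real.cos_nonneg_of_mem_Icc
      ⟨by linarith [hθ₂.1, Real.pi_pos], hθ₂.2⟩
    nlinarith [hθ₂.1, hθ₂.2]
  simp only [cosAng, h₁, h₂, h₁par, h₂par, h₁perp, h₂perp, hcos₁, hcos₂, hsin₁, hsin₂]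
  rw [hortho]
  field_simp
  linear_combination (-1)*hpyth₁ + (-1)*hpyth₂
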